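/- Let K be a continuous function on the circle 𝕋 satisfying K(x) ≥ 1 for all x ∈ [−1/4, 1/4], and let f be a pdf supported on [−1/4, 1/4]. Then ‖f∗f‖_∞ ≥ ‖f∗f‖₂² ≥ ‖K̂‖_{4/3}^{−4}. -/

import Mathlib

open MeasureTheory
/-- Convolution of two functions on the circle `𝕋 = ℝ/ℤ` (with its Haar measure). -/
noncomputable def conv (f g : UnitAddCircle → ℝ) (c : UnitAddCircle) : ℝ := ∫ x, f x * g (c - x)

/-- A pdf on the circle: a nonnegative function in `L²` with integral 1. -/
def IsPdf (f : UnitAddCircle → ℝ) : Prop :=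
  (∀ x, 0 ≤ f x) ∧ MeasureTheory.MemLp f 2 volume ∧ (∫ x, f x) = 1

/-- The function `f` on the circle is supported on (the image of) `[-1/4, 1/4]`. -/
def SuppIn (f : UnitAddCircle → ℝ) : Prop :=
  ∀ x : UnitAddCircle, f x ≠ 0 → ∃ r : ℝ, |r| ≤ 1/4 ∧ (r : UnitAddCircle) = x

/-- The essential supremum (`L^∞` norm) of a function on the circle. -/
noncomputable def normInf (h : UnitAddCircle → ℝ) : ℝ := (eLpNorm h ⊤ volume).toReal

/-- The square of the `L²` norm of a function on the circle. -/
noncomputable def norm2sq (h : UnitAddCircle → ℝ) : ℝ := ∫ x, (h x)^2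

/-- The `j`-th Fourier coefficient of a real function on the circle. -/
noncomputable def fc (f : UnitAddCircle → ℝ) (j : ℤ) : ℂ := fourierCoeff (fun x => (f x : ℂ)) j

/-- The `ℓ^{4/3}` norm of the Fourier coefficient sequence of `K`. -/
noncomputable def khat43 (K : UnitAddCircle → ℝ) : ℝ :=
  (∑' j : ℤ, ‖fc K j‖ ^ ((4:ℝ)/3)) ^ ((3:ℝ)/4)

open AddCircle Complex
open scoped ENNReal NNReal

namespace BKB

lemma vol_eq : (volume : Measure UnitAddCircle) = haarAddCircle := by
  rw [volume_eq_smul_haarAddCircle]; simp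

instance : IsProbabilityMeasure (volume : Measure UnitAddCircle) := by
  rw [vol_eq]; infer_instance

/-- Fourier coefficient of a convolution is the product. -/
lemma fc_conv (f : UnitAddCircle → ℝ) (hf : Integrable f volume) (j : ℤ) :
    fc (conv f f) j = (fc f j) ^ 2 := by
  classical
  set e : UnitAddCircle → ℂ := fun t => fourier (-j) t with he_def
  have he : ∀ a b : UnitAddCircle, e (a + b) = e a * e b := by
    intro a b
    simp only [he_def, fourier_apply, smul_add, toCircle_add, Circle.coe_mul]
  have hec : Continuous e := (fourier (-j)).continuous
  have hfC : Integrable (fun x => (f x : ℂ)) volume := hf.ofReal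
  have hint : Integrable (fun p : UnitAddCircle × UnitAddCircle =>
      e p.1 * ((f p.2 : ℂ) * (f (p.1 - p.2) : ℂ))) (volume.prod volume) := by
    refine Integrable.bdd_mul (c := 1)
      (hfC.convolution_integrand (ContinuousLinearMap.mul ℂ ℂ) hfC)
      ((hec.comp continuous_fst).aestronglyMeasurable) ?_
    filter_upwards with p
    simp [he_def, Circle.norm_coe]
  have hC : fc f j = ∫ t, e t * (f t : ℂ) := by
    rw [fc, fourierCoeff, vol_eq]
    simp_rw [smul_eq_mul]
    rfl
  have h1 : fc (conv f f) j = ∫ t, e t * ((conv f f t : ℝ) : ℂ) := by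
    rw [fc, fourierCoeff, vol_eq]
    simp_rw [smul_eq_mul]
    rfl
  rw [h1]
  have h2 : ∀ t, ((conv f f t : ℝ) : ℂ) = ∫ x, (f x : ℂ) * (f (t - x) : ℂ) := by
    intro t
    have h := integral_ofReal (𝕜 := ℂ) (μ := (volume : Measure UnitAddCircle))
      (f := fun x => f x * f (t - x))
    rw [conv]
    push_cast at h
    exact h.symm
  simp_rw [h2, ← integral_const_mul]
  rw [integral_integral_swap hint]
  have h3 : ∀ x : UnitAddCircle, (∫ t, e t * ((f x : ℂ) * (f (t - x) : ℂ)))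
      = (f x : ℂ) * e x * ∫ t, e t * (f t : ℂ) := by
    intro x
    have := integral_add_right_eq_self (μ := volume)
      (fun t => e t * ((f x : ℂ) * (f (t - x) : ℂ))) x
    rw [← this]
    simp_rw [add_sub_cancel_right, he]
    rw [show (fun t => e t * e x * ((f x:ℂ) * (f t:ℂ)))
        = (fun t => (e t * (f t : ℂ)) * ((f x : ℂ) * e x)) from funext fun t => by ring,
      integral_mul_const]
    ring
  simp_rw [h3]
  rw [integral_mul_const, hC]
  rw [show (fun x => (f x : ℂ) * e x) = fun x => e x * (f x : ℂ) from funext fun x => by ring]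
  ring

/-- Parseval for real functions in L². -/
lemma parseval_real (g : UnitAddCircle → ℝ) (hg : MemLp g 2 volume) :
    ∑' j : ℤ, ‖fc g j‖ ^ 2 = ∫ x, (g x) ^ 2 := by
  have hgC : MemLp (fun x => (g x : ℂ)) 2 (haarAddCircle (T := 1)) := by
    rw [← vol_eq]; exact hg.ofReal
  set gL : Lp ℂ 2 (haarAddCircle (T := 1)) := hgC.toLp _ with hgL
  have hae := hgC.coeFn_toLp
  have h1 : ∀ j : ℤ, fourierCoeff (gL : UnitAddCircle → ℂ) j = fc g j := by
    intro j
    rw [fc, fourierCoeff, fourierCoeff]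
    refine integral_congr_ae ?_
    filter_upwards [hae] with t ht
    rw [ht]
  have h2 := tsum_sq_fourierCoeff gL
  simp_rw [h1] at h2
  rw [h2, vol_eq]
  refine integral_congr_ae ?_
  filter_upwards [hae] with t ht
  rw [ht]
  simp [Real.norm_eq_abs, sq_abs]

/-- Summability of squared Fourier coefficients for L² functions. -/
lemma summable_fc_sq (g : UnitAddCircle → ℝ) (hg : MemLp g 2 volume) :
    Summable (fun j : ℤ => ‖fc g j‖ ^ 2) := by
  have hgC : MemLp (fun x => (g x : ℂ)) 2 (haarAddCircle (T := 1)) := by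
    rw [← vol_eq]; exact hg.ofReal
  set gL : Lp ℂ 2 (haarAddCircle (T := 1)) := hgC.toLp _ with hgL
  have h1 : ∀ j : ℤ, fourierCoeff (gL : UnitAddCircle → ℂ) j = fc g j := by
    intro j
    rw [fc, fourierCoeff, fourierCoeff]
    refine integral_congr_ae ?_
    filter_upwards [hgC.coeFn_toLp] with t ht
    rw [ht]
  have h2 : HasSum (fun i : ℤ => ‖fourierBasis.repr gL i‖ ^ (2:ℝ)) (‖fourierBasis.repr gL‖ ^ (2:ℝ)) := by
    apply lp.hasSum_norm
    norm_num
  have h3 := h2.summable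
  simp_rw [fourierBasis_repr, h1, Real.rpow_two] at h3
  exact h3


section Fprops

variable {f : UnitAddCircle → ℝ}

lemma integrable_of_L2 (hf2 : MemLp f 2 volume) : Integrable f volume :=
  memLp_one_iff_integrable.mp (hf2.mono_exponent (by norm_num))

lemma conv_eq_convolution (f g : UnitAddCircle → ℝ) :
    conv f g = convolution f g (ContinuousLinearMap.mul ℝ ℝ) volume := rfl

lemma conv_nonneg' (hf0 : ∀ x, 0 ≤ f x) (c : UnitAddCircle) : 0 ≤ conv f f c :=
  integral_nonneg fun x => mul_nonneg (hf0 x) (hf0 _)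

lemma conv_integrable (hf2 : MemLp f 2 volume) : Integrable (conv f f) volume := by
  rw [conv_eq_convolution]
  exact (integrable_of_L2 hf2).integrable_convolution (ContinuousLinearMap.mul ℝ ℝ)
    (integrable_of_L2 hf2)

lemma integral_conv (hf2 : MemLp f 2 volume) (hf1 : (∫ x, f x) = 1) :
    (∫ c, conv f f c) = 1 := by
  rw [conv_eq_convolution]
  rw [integral_convolution (ContinuousLinearMap.mul ℝ ℝ) (integrable_of_L2 hf2)
    (integrable_of_L2 hf2)]
  rw [hf1]
  simp

lemma conv_le_bound (hf0 : ∀ x, 0 ≤ f x) (hf2 : MemLp f 2 volume) (c : UnitAddCircle) :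
    conv f f c ≤ ∫ x, (f x) ^ 2 := by
  have hmp : MeasurePreserving (fun x : UnitAddCircle => c - x) volume volume := by
    refine ⟨(measurable_const.sub measurable_id), ?_⟩
    exact Measure.map_sub_left_eq_self volume c
  have h2' : MemLp (fun x => f (c - x)) 2 volume := hf2.comp_measurePreserving hmp
  have hconj : (2:ℝ).HolderConjugate 2 := Real.holderConjugate_iff.mpr ⟨by norm_num, by norm_num⟩
  have hof : ENNReal.ofReal (2:ℝ) = 2 := by norm_num
  have hh := integral_mul_le_Lp_mul_Lq_of_nonneg (μ := volume) hconj
    (Filter.Eventually.of_forall hf0) (Filter.Eventually.of_forall fun x => hf0 (c - x))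
    (hof ▸ hf2) (hof ▸ h2')
  rw [conv]
  refine le_trans hh ?_
  have hsub : (∫ x, f (c - x) ^ (2:ℝ)) = ∫ x, f x ^ (2:ℝ) :=
    integral_sub_left_eq_self (fun x => f x ^ (2:ℝ)) volume c
  rw [hsub]
  have hnn : 0 ≤ ∫ x, f x ^ (2:ℝ) := integral_nonneg fun x => Real.rpow_nonneg (hf0 x) _
  have heq : (∫ x, f x ^ (2:ℝ)) ^ ((1:ℝ)/2) * (∫ x, f x ^ (2:ℝ)) ^ ((1:ℝ)/2)
      = ∫ x, f x ^ (2:ℝ) := by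
    rw [← Real.rpow_add' hnn (by norm_num)]
    norm_num
  rw [heq]
  refine le_of_eq (integral_congr_ae ?_)
  filter_upwards with x
  rw [← Real.rpow_natCast (f x) 2]
  norm_num

lemma conv_memtop (hf0 : ∀ x, 0 ≤ f x) (hf2 : MemLp f 2 volume) :
    MemLp (conv f f) ⊤ volume := by
  refine memLp_top_of_bound (conv_integrable hf2).aestronglyMeasurable (∫ x, (f x)^2) ?_
  filter_upwards with c
  rw [Real.norm_eq_abs, _root_.abs_of_nonneg (conv_nonneg' hf0 c)]
  exact conv_le_bound hf0 hf2 c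

lemma conv_mem2 (hf0 : ∀ x, 0 ≤ f x) (hf2 : MemLp f 2 volume) :
    MemLp (conv f f) 2 volume := by
  refine MemLp.of_bound (conv_integrable hf2).aestronglyMeasurable (∫ x, (f x)^2) ?_
  filter_upwards with c
  rw [Real.norm_eq_abs, _root_.abs_of_nonneg (conv_nonneg' hf0 c)]
  exact conv_le_bound hf0 hf2 c

/-- Second inequality: `‖F‖₂² ≤ ‖F‖_∞`. -/
lemma second_ineq (hf0 : ∀ x, 0 ≤ f x) (hf2 : MemLp f 2 volume)
    (hf1 : (∫ x, f x) = 1) : norm2sq (conv f f) ≤ normInf (conv f f) := by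
  set F := conv f f with hF
  set M := normInf F with hM
  have htop := conv_memtop hf0 hf2
  have hne : eLpNorm F ⊤ volume ≠ ⊤ := htop.2.ne
  have hae : ∀ᵐ c ∂(volume : Measure UnitAddCircle), F c ≤ M := by
    have h := ae_le_eLpNormEssSup (f := F) (μ := (volume : Measure UnitAddCircle))
    filter_upwards [h] with c hc
    have h2 : (‖F c‖₊ : ℝ≥0∞).toReal ≤ (eLpNormEssSup F volume).toReal := by
      refine ENNReal.toReal_mono ?_ hc
      rw [← eLpNorm_exponent_top]; exact hne
    have h3 : ‖F c‖ ≤ M := by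
      simpa [hM, normInf, eLpNorm_exponent_top] using h2
    exact le_trans (le_abs_self (F c)) (by simpa [Real.norm_eq_abs] using h3)
  have hFint : Integrable F volume := conv_integrable hf2
  have hFsq : Integrable (fun c => F c ^ 2) volume := (conv_mem2 hf0 hf2).integrable_sq
  have h1 : ∫ c, F c ^ 2 ≤ ∫ c, M * F c := by
    refine integral_mono_ae hFsq (hFint.const_mul M) ?_
    filter_upwards [hae] with c hc
    nlinarith [conv_nonneg' hf0 c, hc]
  have h2 : ∫ c, M * F c = M := by
    rw [integral_const_mul, integral_conv hf2 hf1]; simp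
  calc norm2sq F = ∫ c, F c ^ 2 := rfl
  _ ≤ ∫ c, M * F c := h1
  _ = M := h2

end Fprops

lemma fc_le_one {f : UnitAddCircle → ℝ} (hf0 : ∀ x, 0 ≤ f x) (hfi : Integrable f volume)
    (hf1 : (∫ x, f x) = 1) (j : ℤ) : ‖fc f j‖ ≤ 1 := by
  rw [fc, fourierCoeff]
  refine le_trans (norm_integral_le_integral_norm _) ?_
  have heq : ∀ t : UnitAddCircle, ‖fourier (-j) t • ((f t : ℝ) : ℂ)‖ = f t := by
    intro t
    rw [norm_smul]
    simp [_root_.abs_of_nonneg (hf0 t), Circle.norm_coe]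
  have hone : (∫ t, ‖fourier (-j) t • ((f t : ℝ) : ℂ)‖ ∂haarAddCircle) = 1 := by
    rw [integral_congr_ae (Filter.Eventually.of_forall heq), ← vol_eq, hf1]
  exact le_of_eq hone

lemma integral_mul_eq_tsum (k g : UnitAddCircle → ℝ) (hk : MemLp k 2 volume)
    (hg : MemLp g 2 volume) :
    ((∫ x, k x * g x : ℝ) : ℂ) = ∑' j : ℤ, (starRingEnd ℂ) (fc k j) * fc g j := by
  have hkC : MemLp (fun x => (k x : ℂ)) 2 (haarAddCircle (T := 1)) := by
    rw [← vol_eq]; exact hk.ofReal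
  have hgC : MemLp (fun x => (g x : ℂ)) 2 (haarAddCircle (T := 1)) := by
    rw [← vol_eq]; exact hg.ofReal
  set kL : Lp ℂ 2 (haarAddCircle (T := 1)) := hkC.toLp _ with hkL
  set gL : Lp ℂ 2 (haarAddCircle (T := 1)) := hgC.toLp _ with hgL
  have hreprg : ∀ j : ℤ, (inner (𝕜 := ℂ) ((fourierBasis (T := 1)) j) gL) = fc g j := by
    intro j
    rw [← HilbertBasis.repr_apply_apply, fourierBasis_repr]
    rw [fc, fourierCoeff, fourierCoeff]
    refine integral_congr_ae ?_
    filter_upwards [hgC.coeFn_toLp] with t ht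
    rw [ht]
  have hreprk : ∀ j : ℤ, (inner (𝕜 := ℂ) ((fourierBasis (T := 1)) j) kL) = fc k j := by
    intro j
    rw [← HilbertBasis.repr_apply_apply, fourierBasis_repr]
    rw [fc, fourierCoeff, fourierCoeff]
    refine integral_congr_ae ?_
    filter_upwards [hkC.coeFn_toLp] with t ht
    rw [ht]
  have h := HilbertBasis.tsum_inner_mul_inner (fourierBasis (T := 1)) kL gL
  have hL : (inner (𝕜 := ℂ) kL gL) = ((∫ x, k x * g x : ℝ) : ℂ) := by
    rw [MeasureTheory.L2.inner_def]
    have : ∫ a, (inner (𝕜 := ℂ) (kL a) (gL a)) ∂haarAddCircle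
        = ∫ a, ((k a * g a : ℝ) : ℂ) ∂haarAddCircle := by
      refine integral_congr_ae ?_
      filter_upwards [hkC.coeFn_toLp, hgC.coeFn_toLp] with t htk htg
      rw [htk, htg, RCLike.inner_apply, Complex.conj_ofReal]
      push_cast
      ring
    rw [this]
    have h2 := integral_ofReal (𝕜 := ℂ) (μ := (haarAddCircle : Measure UnitAddCircle))
      (f := fun a => k a * g a)
    push_cast at h2 ⊢
    rw [vol_eq]
    exact h2
  have hterm : ∀ j : ℤ, (inner (𝕜 := ℂ) kL ((fourierBasis (T := 1)) j))
      * (inner (𝕜 := ℂ) ((fourierBasis (T := 1)) j) gL)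
      = (starRingEnd ℂ) (fc k j) * fc g j := by
    intro j
    rw [← inner_conj_symm kL ((fourierBasis (T := 1)) j), hreprk, hreprg]
  rw [← hL, ← h]
  exact tsum_congr hterm

lemma first_ineq (K : UnitAddCircle → ℝ) (hKcont : Continuous K)
    (hK1 : ∀ r : ℝ, |r| ≤ 1/4 → 1 ≤ K (r : UnitAddCircle))
    (f : UnitAddCircle → ℝ) (hf0 : ∀ x, 0 ≤ f x) (hf2 : MemLp f 2 volume)
    (hf1 : (∫ x, f x) = 1) (hsupp : SuppIn f) :
    (khat43 K)⁻¹ ^ 4 ≤ norm2sq (conv f f) := by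
  have hAnn : (0:ℝ) ≤ norm2sq (conv f f) := integral_nonneg fun c => sq_nonneg _
  by_cases hsK : Summable (fun j : ℤ => ‖fc K j‖ ^ ((4:ℝ)/3))
  swap
  · rw [khat43, tsum_eq_zero_of_not_summable hsK, Real.zero_rpow (by norm_num), inv_zero]
    simpa using hAnn
  obtain ⟨C, hC⟩ := IsCompact.exists_bound_of_continuousOn isCompact_univ hKcont.continuousOn
  have hK2 : MemLp K 2 volume :=
    MemLp.of_bound hKcont.aestronglyMeasurable C (Filter.Eventually.of_forall fun x => hC x trivial)
  have hfi : Integrable f volume := integrable_of_L2 hf2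
  have hKf_int : Integrable (fun x => K x * f x) volume :=
    hfi.bdd_mul (c := C) hKcont.aestronglyMeasurable (Filter.Eventually.of_forall fun x => hC x trivial)
  have h1 : (1:ℝ) ≤ ∫ x, K x * f x := by
    refine le_trans (le_of_eq hf1.symm) (integral_mono hfi hKf_int fun x => ?_)
    by_cases hx : f x = 0
    · simp [hx]
    · obtain ⟨r, hr, hrx⟩ := hsupp x hx
      have hKx := hK1 r hr
      rw [hrx] at hKx
      nlinarith [hf0 x, lt_of_le_of_ne (hf0 x) (Ne.symm hx)]
  have hsum2f := summable_fc_sq f hf2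
  have hfc1 : ∀ j, ‖fc f j‖ ≤ 1 := fc_le_one hf0 hfi hf1
  have hsum4 : Summable (fun j : ℤ => ‖fc f j‖ ^ (4:ℝ)) := by
    refine Summable.of_nonneg_of_le (fun j => Real.rpow_nonneg (norm_nonneg _) _)
      (fun j => ?_) hsum2f
    rw [show ((4:ℝ)) = ((4:ℕ):ℝ) by norm_num, Real.rpow_natCast]
    calc ‖fc f j‖ ^ (4:ℕ) ≤ ‖fc f j‖ ^ (2:ℕ) :=
      pow_le_pow_of_le_one (norm_nonneg _) (hfc1 j) (by norm_num)
    _ = ‖fc f j‖ ^ 2 := by norm_num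
  have hholder := Real.summable_and_inner_le_Lp_mul_Lq_tsum_of_nonneg (p := 4) (q := 4/3)
    (Real.holderConjugate_iff.mpr ⟨by norm_num, by norm_num⟩) (fun j => norm_nonneg (fc f j)) (fun j => norm_nonneg (fc K j))
    hsum4 hsK
  obtain ⟨hsummul, hbound⟩ := hholder
  have h2 : (1:ℝ) ≤ ∑' j : ℤ, ‖fc f j‖ * ‖fc K j‖ := by
    have heq := integral_mul_eq_tsum K f hK2 hf2
    have hnormeq : (fun j : ℤ => ‖(starRingEnd ℂ) (fc K j) * fc f j‖)
        = fun j : ℤ => ‖fc f j‖ * ‖fc K j‖ := by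
      funext j
      rw [norm_mul, RCLike.norm_conj, mul_comm]
    have h3 : (1:ℝ) ≤ ‖((∫ x, K x * f x : ℝ) : ℂ)‖ := by
      rw [Complex.norm_real, Real.norm_eq_abs]
      exact le_trans h1 (le_abs_self _)
    rw [heq] at h3
    refine le_trans h3 ?_
    refine le_trans (norm_tsum_le_tsum_norm ?_) (le_of_eq ?_)
    · rw [hnormeq]; exact hsummul
    · rw [hnormeq]
  have hP : ∑' j : ℤ, ‖fc f j‖ ^ (4:ℝ) = norm2sq (conv f f) := by
    have hpar := parseval_real (conv f f) (conv_mem2 hf0 hf2)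
    rw [norm2sq, ← hpar]
    refine tsum_congr fun j => ?_
    rw [fc_conv f hfi j, norm_pow]
    rw [show ((4:ℝ)) = ((4:ℕ):ℝ) by norm_num, Real.rpow_natCast]
    ring
  set A := norm2sq (conv f f) with hA
  set B := khat43 K with hB
  have hBnn : 0 ≤ B := Real.rpow_nonneg (tsum_nonneg fun j => Real.rpow_nonneg (norm_nonneg _) _) _
  have hmain : (1:ℝ) ≤ A ^ ((1:ℝ)/4) * B := by
    refine le_trans h2 ?_
    refine le_trans hbound (le_of_eq ?_)
    rw [hP, hB, khat43]
    norm_num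
  have hBpos : 0 < B := by
    rcases lt_or_eq_of_le hBnn with h | h
    · exact h
    · exfalso
      rw [← h, mul_zero] at hmain
      linarith
  have h5 : B⁻¹ ≤ A ^ ((1:ℝ)/4) := by
    rw [← one_div, div_le_iff₀ hBpos]
    exact hmain
  have h6 : (A ^ ((1:ℝ)/4)) ^ (4:ℕ) = A := by
    rw [← Real.rpow_natCast (A ^ ((1:ℝ)/4)) 4, ← Real.rpow_mul hAnn]
    norm_num
  calc B⁻¹ ^ 4 ≤ (A ^ ((1:ℝ)/4)) ^ (4:ℕ) :=
    pow_le_pow_left₀ (inv_nonneg.mpr hBnn) h5 4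
  _ = A := h6

end BKB

theorem basic_kernel_bound (K : UnitAddCircle → ℝ) (hKcont : Continuous K)
    (hK1 : ∀ r : ℝ, |r| ≤ 1/4 → 1 ≤ K (r : UnitAddCircle))
    (f : UnitAddCircle → ℝ) (hf : IsPdf f) (hsupp : SuppIn f) :
    (khat43 K)⁻¹ ^ 4 ≤ norm2sq (conv f f) ∧ norm2sq (conv f f) ≤ normInf (conv f f) := by
  obtain ⟨hf0, hf2, hf1⟩ := hf
  exact ⟨BKB.first_ineq K hKcont hK1 f hf0 hf2 hf1 hsupp, BKB.second_ineq hf0 hf2 hf1⟩
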